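/- Let n ≥ 1, α = 1/√(n+2), and γ0 = α/2 − α³/(2(1+α)²), γ2 = 1/(2α) + α/(1+α)², γ4 = 1/(2α(1+α)²). For u ∈ [−1,1], equality |u| = γ0 + γ2·u² − γ4·u⁴ holds if and only if |u| = 1 or |u| = α. -/
import Mathlib


theorem stmt_1 (n : ℕ) (hn : 1 ≤ n) (α γ0 γ2 γ4 : ℝ)
    (hα : α = 1 / Real.sqrt (n + 2))
    (h0 : γ0 = α / 2 - α ^ 3 / (2 * (1 + α) ^ 2))
    (h2 : γ2 = 1 / (2 * α) + α / (1 + α) ^ 2)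
    (h4 : γ4 = 1 / (2 * α * (1 + α) ^ 2))
    (u : ℝ) (hu : u ∈ Set.Icc (-1 : ℝ) 1) :
    |u| = γ0 + γ2 * u ^ 2 - γ4 * u ^ 4 ↔ |u| = 1 ∨ |u| = α := by
  have hs : (0:ℝ) < Real.sqrt (n + 2) := Real.sqrt_pos.mpr (by positivity)
  have hα0 : 0 < α := by rw [hα]; exact div_pos one_pos hs
  have hαne : α ≠ 0 := ne_of_gt hα0
  have h1α : (1 + α) ≠ 0 := by nlinarith
  set t := |u| with ht
  have ht0 : 0 ≤ t := abs_nonneg u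
  have hu2 : u ^ 2 = t ^ 2 := (sq_abs u).symm
  have hu4 : u ^ 4 = t ^ 4 := by
    rw [ht, ← abs_pow]; exact (abs_of_nonneg (by positivity)).symm
  have key : γ0 + γ2 * u ^ 2 - γ4 * u ^ 4 - t =
      ((1 - t) * (t - α) ^ 2 * (t + 1 + 2 * α)) / (2 * α * (1 + α) ^ 2) := by
    rw [hu2, hu4, h0, h2, h4]
    field_simp
    ring
  have hden : (2 * α * (1 + α) ^ 2) ≠ 0 := by positivity
  have hpos : 0 < t + 1 + 2 * α := by nlinarith
  constructor
  · intro h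
    have hz : (1 - t) * (t - α) ^ 2 * (t + 1 + 2 * α) = 0 := by
      have : ((1 - t) * (t - α) ^ 2 * (t + 1 + 2 * α)) / (2 * α * (1 + α) ^ 2) = 0 := by
        rw [← key]; linarith
      exact (div_eq_zero_iff.mp this).resolve_right hden
    have hz2 : (1 - t) * (t - α) ^ 2 = 0 := by
      rcases mul_eq_zero.mp hz with h' | h'
      · exact h'
      · exact absurd h' (ne_of_gt hpos)
    rcases mul_eq_zero.mp hz2 with h' | h'
    · left; linarith
    · right; have := pow_eq_zero_iff (n := 2) (by norm_num) |>.mp h'; linarith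
  · rintro (h | h)
    · rw [h] at key ⊢
      have : (1 - 1) * (1 - α) ^ 2 * (1 + 1 + 2 * α) = 0 := by ring
      rw [this, zero_div] at key; linarith
    · rw [h] at key ⊢
      have : (1 - α) * (α - α) ^ 2 * (α + 1 + 2 * α) = 0 := by ring
      rw [this, zero_div] at key; linarith
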